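/- Let (T, θ) be a stratified staged tree. If every two vertices of T that are in the same stage are also in the same position (i.e. they additionally satisfy t(v) = t(w)), then (T, θ) is balanced. -/

import Mathlib

open MvPolynomial

inductive STree (L : Type) where
  | leaf : STree L
  | node : List (L × STree L) → STree L

namespace STree

variable {L : Type}

def children : STree L → List (L × STree L)
  | .leaf => []
  | .node cs => cs

def paths : STree L → List (List L)
  | .leaf => [[]]
  | .node cs => cs.attach.flatMap (fun x => (paths x.1.2).map (fun p => x.1.1 :: p))
termination_by t => sizeOf t
decreasing_by
  have h := List.sizeOf_lt_of_mem x.2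
  obtain ⟨⟨l, c⟩, hm⟩ := x
  simp only [Prod.mk.sizeOf_spec] at h
  simp only [STree.node.sizeOf_spec]
  omega

noncomputable def tpoly (T : STree L) : MvPolynomial L ℝ :=
  ((paths T).map (fun p => (p.map X).prod)).sum

def outLabels (T : STree L) : List L := T.children.map Prod.fst

def SameStage (v w : STree L) : Prop := ∀ l, l ∈ v.outLabels ↔ l ∈ w.outLabels

inductive OccursAt : STree L → ℕ → STree L → Prop where
  | refl (T : STree L) : OccursAt T 0 T
  | child {cs : List (L × STree L)} {l : L} {c v : STree L} {n : ℕ} :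
      (l, c) ∈ cs → OccursAt c n v → OccursAt (.node cs) (n + 1) v

def IsStagedTree (T : STree L) : Prop :=
  (∀ n cs, OccursAt T n (.node cs) → cs ≠ [] ∧ (cs.map Prod.fst).Nodup) ∧
  (∀ n m v w, OccursAt T n v → OccursAt T m w →
    (SameStage v w ∨ ∀ l, ¬(l ∈ v.outLabels ∧ l ∈ w.outLabels)))

def Star (v w : STree L) : Prop :=
  ∀ l l' c c' d d', l ≠ l' →
    (l, c) ∈ v.children → (l', c') ∈ v.children →
    (l, d) ∈ w.children → (l', d') ∈ w.children →
    tpoly c * tpoly d' = tpoly d * tpoly c'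

def Balanced (T : STree L) : Prop :=
  ∀ n m v w, OccursAt T n v → OccursAt T m w → SameStage v w → Star v w

def Stratified (T : STree L) : Prop :=
  (∀ n m, OccursAt T n .leaf → OccursAt T m .leaf → n = m) ∧
  (∀ n m v w, OccursAt T n v → OccursAt T m w → SameStage v w → n = m)

end STree

namespace STree
variable {L : Type}

theorem occursAt_trans {a b u : STree L} {n m : ℕ}
    (h1 : OccursAt a n b) (h2 : OccursAt b m u) : OccursAt a (n + m) u := by
  induction h1 with
  | refl => simpa using h2
  | child hm _ ih =>
      have := OccursAt.child hm (ih h2)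
      simpa [Nat.add_right_comm] using this

theorem tpoly_node (cs : List (L × STree L)) :
    tpoly (.node cs) = (cs.map fun x => X x.1 * tpoly x.2).sum := by
  unfold tpoly
  rw [paths, List.flatMap, List.map_flatten, List.sum_flatten, List.map_map, List.map_map]
  congr 1
  rw [← List.attach_map_val (l := cs)
    (f :=     (fun x => X x.1 * (List.map (fun p => (List.map X p).prod) x.2.paths).sum))]
  apply List.map_congr_left
  intro a _
  simp only [Function.comp_def, List.map_map]
  rw [← List.sum_map_mul_left]
  rfl


theorem mem_paths_occurs (T : STree L) {p : List L} {l : L}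
    (hp : p ∈ paths T) (hl : l ∈ p) :
    ∃ k u, OccursAt T k u ∧ l ∈ u.outLabels := by
  match T with
  | .leaf =>
      rw [paths] at hp
      simp at hp
      subst hp
      simp at hl
  | .node cs =>
      rw [paths] at hp
      rw [List.mem_flatMap] at hp
      obtain ⟨x, hx, hp⟩ := hp
      rw [List.mem_map] at hp
      obtain ⟨q, hq, rfl⟩ := hp
      rcases List.mem_cons.mp hl with rfl | hl'
      · refine ⟨0, .node cs, .refl _, ?_⟩
        simp only [outLabels, children, List.mem_map]
        exact ⟨x.1, x.2, rfl⟩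
      · obtain ⟨k, u, ho, hu⟩ := mem_paths_occurs x.1.2 hq hl'
        exact ⟨k + 1, u, .child (show (x.1.1, x.1.2) ∈ cs from x.2) ho, hu⟩
termination_by sizeOf T
decreasing_by
  have h := List.sizeOf_lt_of_mem x.2
  obtain ⟨⟨l, c⟩, hm⟩ := x
  simp only [Prod.mk.sizeOf_spec] at h
  simp only [STree.node.sizeOf_spec]
  omega

theorem aeval_tpoly_fix (T : STree L) (σ : L → MvPolynomial L ℝ)
    (hσ : ∀ l, (∃ k u, OccursAt T k u ∧ l ∈ u.outLabels) → σ l = X l) :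
    aeval σ (tpoly T) = tpoly T := by
  unfold tpoly
  rw [map_list_sum, List.map_map]
  congr 1
  apply List.map_congr_left
  intro p hp
  simp only [Function.comp_def]
  rw [map_list_prod, List.map_map]
  congr 1
  apply List.map_congr_left
  intro l hl
  simp only [Function.comp_def, aeval_X]
  exact hσ l (mem_paths_occurs T hp hl)

theorem sum_single_ne_zero (g : L × STree L → MvPolynomial L ℝ) :
    ∀ (cs : List (L × STree L)), (cs.map Prod.fst).Nodup →
    ∀ l c, (l, c) ∈ cs → (∀ x ∈ cs, x.1 ≠ l → g x = 0) →
    (cs.map g).sum = g (l, c)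
  | [], _, l, c, hm, _ => by simp at hm
  | a :: cs, hnd, l, c, hm, hz => by
      rw [List.map_cons, List.nodup_cons] at hnd
      rcases List.mem_cons.mp hm with rfl | hm'
      · have : ∀ x ∈ cs, g x = 0 := by
          intro x hx
          refine hz x (List.mem_cons_of_mem _ hx) ?_
          intro hxl
          have hmem : x.1 ∈ List.map Prod.fst cs := List.mem_map_of_mem hx
          rw [hxl] at hmem
          exact hnd.1 hmem
        have hz0 : (cs.map g).sum = 0 := by
          apply List.sum_eq_zero
          intro y hy
          obtain ⟨x, hx, rfl⟩ := List.mem_map.mp hy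
          exact this x hx
        simp [hz0]
      · have hal : a.1 ≠ l := by
          intro h
          exact hnd.1 (h ▸ (by simpa using List.mem_map_of_mem (f := Prod.fst) hm'))
        rw [List.map_cons, List.sum_cons, hz a (List.mem_cons_self (a := a) (l := cs)) hal, zero_add]
        exact sum_single_ne_zero g cs hnd.2 l c hm'
          (fun x hx => hz x (List.mem_cons_of_mem _ hx))

end STree

open STree in
theorem stmt1 {L : Type} (T : STree L) (hst : IsStagedTree T) (hS : Stratified T)
    (hpos : ∀ n m v w, OccursAt T n v → OccursAt T m w → SameStage v w → tpoly v = tpoly w) :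
    Balanced T := by
  intro n m v w hv hw hvw
  have key : ∀ l c d, (l, c) ∈ v.children → (l, d) ∈ w.children → tpoly c = tpoly d := by
    intro l c d hc hd
    classical
    cases v with
    | leaf => simp [children] at hc
    | node cs =>
      cases w with
      | leaf => simp [children] at hd
      | node ds =>
        simp only [children] at hc hd
        have hndc := (hst.1 n cs hv).2
        have hndd := (hst.1 m ds hw).2
        have heq : tpoly (.node cs : STree L) = tpoly (.node ds) := hpos n m _ _ hv hw hvw
        set σ : L → MvPolynomial L ℝ :=
          fun a => if a ≠ l ∧ a ∈ outLabels (.node cs : STree L) then 0 else X a with hσdef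
        have hfix_l : σ l = X l := by simp [hσdef]
        have hzero : ∀ a, a ≠ l → a ∈ outLabels (.node cs : STree L) → σ a = 0 := by
          intro a h1 h2; simp [hσdef, h1, h2]
        have hfixc : ∀ l', (∃ k u, OccursAt c k u ∧ l' ∈ u.outLabels) → σ l' = X l' := by
          rintro l' ⟨k, u, ho, hu⟩
          by_cases hin : l' ≠ l ∧ l' ∈ outLabels (.node cs : STree L)
          · exfalso
            have hou : OccursAt T (n + (k + 1)) u := occursAt_trans hv (.child hc ho)
            rcases hst.2 n (n + (k + 1)) _ _ hv hou with hss | hdisj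
            · have := hS.2 n (n + (k + 1)) _ _ hv hou hss; omega
            · exact hdisj l' ⟨hin.2, hu⟩
          · simp [hσdef, hin]
        have hfixd : ∀ l', (∃ k u, OccursAt d k u ∧ l' ∈ u.outLabels) → σ l' = X l' := by
          rintro l' ⟨k, u, ho, hu⟩
          by_cases hin : l' ≠ l ∧ l' ∈ outLabels (.node cs : STree L)
          · exfalso
            have hou : OccursAt T (m + (k + 1)) u := occursAt_trans hw (.child hd ho)
            rcases hst.2 m (m + (k + 1)) _ _ hw hou with hss | hdisj
            · have := hS.2 m (m + (k + 1)) _ _ hw hou hss; omega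
            · exact hdisj l' ⟨(hvw l').mp hin.2, hu⟩
          · simp [hσdef, hin]
        have h2 := congrArg (aeval σ : MvPolynomial L ℝ →ₐ[ℝ] MvPolynomial L ℝ) heq
        rw [tpoly_node, tpoly_node, map_list_sum, map_list_sum, List.map_map, List.map_map] at h2
        have hL : (cs.map ((aeval σ : MvPolynomial L ℝ →ₐ[ℝ] MvPolynomial L ℝ) ∘
            fun x => X x.1 * tpoly x.2)).sum = X l * tpoly c := by
          rw [sum_single_ne_zero _ cs hndc l c hc ?_]
          · simp only [Function.comp_apply]
            rw [map_mul, aeval_X, hfix_l, aeval_tpoly_fix c σ hfixc]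
          · intro x hx hxl
            simp only [Function.comp_apply]
            rw [map_mul, aeval_X, hzero x.1 hxl (List.mem_map_of_mem hx), zero_mul]
        have hR : (ds.map ((aeval σ : MvPolynomial L ℝ →ₐ[ℝ] MvPolynomial L ℝ) ∘
            fun x => X x.1 * tpoly x.2)).sum = X l * tpoly d := by
          rw [sum_single_ne_zero _ ds hndd l d hd ?_]
          · simp only [Function.comp_apply]
            rw [map_mul, aeval_X, hfix_l, aeval_tpoly_fix d σ hfixd]
          · intro x hx hxl
            simp only [Function.comp_apply]
            have : x.1 ∈ outLabels (.node cs : STree L) :=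
              (hvw x.1).mpr (List.mem_map_of_mem hx)
            rw [map_mul, aeval_X, hzero x.1 hxl this, zero_mul]
        rw [hL, hR] at h2
        exact mul_left_cancel₀ (X_ne_zero l) h2
  intro l l' c c' d d' hne hc hc' hd hd'
  rw [key l c d hc hd, key l' c' d' hc' hd']
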